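/- Let G be a torsion-free abelian group and let A, B, C be finite nonempty multisets with elements in G, where the sum A + C denotes the multiset of all pairwise sums a + c with multiplicities. If A + C = B + C, then A = B. -/

import Mathlib

/-- Pairwise sum of multisets over an additive group. -/
def pSum {G : Type*} [AddCommGroup G] (A B : Multiset G) : Multiset G :=
  (A.product B).map fun p => p.1 + p.2

namespace MCaux

variable {G : Type*} [AddCommGroup G]

noncomputable def Φ (A : Multiset G) : AddMonoidAlgebra ℤ G :=
  (A.map fun a => AddMonoidAlgebra.single a (1 : ℤ)).sum

lemma Φ_zero : Φ (0 : Multiset G) = 0 := rfl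

lemma Φ_cons (a : G) (s : Multiset G) :
    Φ (a ::ₘ s) = AddMonoidAlgebra.single a 1 + Φ s := by
  simp [Φ]

lemma Φ_coeff [DecidableEq G] (A : Multiset G) (x : G) : (Φ A).coeff x = A.count x := by
  induction A using Multiset.induction_on with
  | empty => simp [Φ_zero]
  | cons a s ih =>
    rw [Φ_cons]
    have : ((AddMonoidAlgebra.single a 1 + Φ s : AddMonoidAlgebra ℤ G)).coeff x
        = (AddMonoidAlgebra.single a (1:ℤ)).coeff x + (Φ s).coeff x := rfl
    rw [this, ih]
    simp [Finsupp.single_apply, Multiset.count_cons]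
    split <;> rename_i hax
    · simp [hax.symm]; ring
    · rw [if_neg (fun h => hax h.symm)]; ring

lemma Φ_add (s t : Multiset G) : Φ (s + t) = Φ s + Φ t := by
  simp [Φ]

lemma Φ_ne_zero {C : Multiset G} (hC : C ≠ 0) : Φ C ≠ 0 := by
  classical
  obtain ⟨c, hc⟩ := Multiset.exists_mem_of_ne_zero hC
  intro h
  have h1 : (Φ C).coeff c = C.count c := Φ_coeff C c
  rw [h] at h1
  have : 0 < C.count c := Multiset.count_pos.mpr hc
  simp at h1
  omega

lemma Φ_injective (A B : Multiset G) (h : Φ A = Φ B) : A = B := by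
  classical
  ext x
  have := congrArg (fun f : AddMonoidAlgebra ℤ G => f.coeff x) h
  simp only [Φ_coeff] at this
  exact_mod_cast this

lemma pSum_zero (C : Multiset G) : pSum (0 : Multiset G) C = 0 := by
  simp [pSum, Multiset.product]

lemma pSum_cons (a : G) (s C : Multiset G) :
    pSum (a ::ₘ s) C = C.map (a + ·) + pSum s C := by
  show ((a ::ₘ s) ×ˢ C).map _ = _
  rw [Multiset.cons_product, Multiset.map_add, Multiset.map_map]
  rfl

lemma Φ_map_add (a : G) (C : Multiset G) :
    Φ (C.map (a + ·)) = AddMonoidAlgebra.single a 1 * Φ C := by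
  induction C using Multiset.induction_on with
  | empty => simp [Φ_zero]
  | cons c s ih =>
    rw [Multiset.map_cons, Φ_cons, Φ_cons, ih, mul_add,
      AddMonoidAlgebra.single_mul_single, mul_one]

lemma Φ_pSum (A C : Multiset G) : Φ (pSum A C) = Φ A * Φ C := by
  induction A using Multiset.induction_on with
  | empty => rw [pSum_zero]; simp [Φ_zero]
  | cons a s ih =>
    rw [pSum_cons, Φ_add, Φ_map_add, ih, Φ_cons, add_mul]

theorem cancel_of_uniqueSums {H : Type*} [AddCommGroup H] [UniqueSums H]
    (A B C : Multiset H) (hC : C ≠ 0) (h : pSum A C = pSum B C) : A = B := by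
  have h2 : Φ A * Φ C = Φ B * Φ C := by rw [← Φ_pSum, ← Φ_pSum, h]
  exact Φ_injective A B (mul_right_cancel₀ (Φ_ne_zero hC) h2)

lemma pSum_map {H : Type*} [AddCommGroup H] (f : H →+ G) (A B : Multiset H) :
    pSum (A.map f) (B.map f) = (pSum A B).map f := by
  induction A using Multiset.induction_on with
  | empty => rw [Multiset.map_zero, pSum_zero, pSum_zero, Multiset.map_zero]
  | cons a s ih =>
    rw [Multiset.map_cons, pSum_cons, pSum_cons, Multiset.map_add, ih,
      Multiset.map_map, Multiset.map_map]
    congr 1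
    apply Multiset.map_congr rfl
    intro x _
    simp

end MCaux

theorem multiset_cancellation {G : Type*} [AddCommGroup G]
    (hG : ∀ g : G, g ≠ 0 → ¬IsOfFinAddOrder g)
    (A B C : Multiset G) (hA : A ≠ 0) (hB : B ≠ 0) (hC : C ≠ 0)
    (h : pSum A C = pSum B C) : A = B := by
  classical
  haveI : IsAddTorsionFree G := isAddTorsionFree_iff_not_isOfFinAddOrder.2 hG
  haveI : NoZeroSMulDivisors ℤ G := IsAddTorsionFree.to_noZeroSMulDivisors_int
  set T : Multiset G := A + B + C with hT
  let M : Submodule ℤ G := Submodule.span ℤ {x | x ∈ T}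
  have hfg : M.FG := by
    apply Submodule.fg_span
    have : {x | x ∈ T} = ↑T.toFinset := by ext x; simp
    rw [this]; exact (T.toFinset : Finset G).finite_toSet
  haveI : Module.Finite ℤ M := Module.Finite.iff_fg.2 hfg
  haveI : NoZeroSMulDivisors ℤ M := by
    constructor
    intro c x hcx
    have hx : c • (x : G) = 0 := congrArg Subtype.val hcx
    rcases smul_eq_zero.mp hx with h1 | h1
    · exact Or.inl h1
    · exact Or.inr (Subtype.ext h1)
  haveI : Module.Free ℤ M := Module.free_of_finite_type_torsion_free'
  let b := Module.Free.chooseBasis ℤ M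
  haveI : UniqueSums M :=
    UniqueSums.of_injective_addHom b.repr.toLinearMap.toAddMonoidHom.toAddHom
      b.repr.injective inferInstance
  have memM : ∀ x ∈ T, x ∈ M := fun x hx => Submodule.subset_span hx
  have hAT : ∀ a ∈ A, a ∈ M := fun a ha => memM a (by simp [hT, ha])
  have hBT : ∀ a ∈ B, a ∈ M := fun a ha => memM a (by simp [hT, ha])
  have hCT : ∀ a ∈ C, a ∈ M := fun a ha => memM a (by simp [hT, ha])
  let A' : Multiset M := A.pmap (fun a ha => (⟨a, ha⟩ : M)) hAT
  let B' : Multiset M := B.pmap (fun a ha => (⟨a, ha⟩ : M)) hBT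
  let C' : Multiset M := C.pmap (fun a ha => (⟨a, ha⟩ : M)) hCT
  have mapA : A'.map (M.subtype.toAddMonoidHom) = A := by
    simp [A', Multiset.map_pmap, Multiset.pmap_eq_map]
  have mapB : B'.map (M.subtype.toAddMonoidHom) = B := by
    simp [B', Multiset.map_pmap, Multiset.pmap_eq_map]
  have mapC : C'.map (M.subtype.toAddMonoidHom) = C := by
    simp [C', Multiset.map_pmap, Multiset.pmap_eq_map]
  have hinj : Function.Injective (M.subtype.toAddMonoidHom) := Subtype.val_injective
  have key : pSum A' C' = pSum B' C' := by
    apply Multiset.map_injective hinj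
    rw [← MCaux.pSum_map, ← MCaux.pSum_map, mapA, mapB, mapC, h]
  have hC' : C' ≠ 0 := by
    intro h0
    apply hC
    rw [← mapC, h0, Multiset.map_zero]
  have : A' = B' := MCaux.cancel_of_uniqueSums A' B' C' hC' key
  rw [← mapA, ← mapB, this]
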